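/- (Polynomially decaying subsolution) Let f : [0,T]×ℝ³ → [0,∞) be a smooth solution of the Landau–Coulomb equation with λ⟨v⟩^{−3} Id ≤ A[f](t,v) ≤ Λ Id for all (t,v), for some 0 < λ ≤ Λ. Then for each k > 5 and a > 0 there exists η = η(λ,Λ,k) > 0 such that the function ψ(t,v) = a e^{−ηt} ⟨v⟩^{−k} satisfies the pointwise inequality ∂_t ψ ≤ A[f] : ∇²_v ψ + f ψ on (0,T)×ℝ³ (here A : B = Σ_{ij} A_{ij} B_{ij} denotes the Frobenius inner product of matrices). -/

import Mathlib

open MeasureTheory Real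
noncomputable section

/-- Velocity space `ℝ³`. -/
abbrev V3 : Type := EuclideanSpace ℝ (Fin 3)

/-- Japanese bracket `⟨v⟩ = (1 + |v|²)^{1/2}`. -/
def jap (v : V3) : ℝ := Real.sqrt (1 + ‖v‖ ^ 2)

/-- Positive part `x₊ = max(x,0)`. -/
def plus (x : ℝ) : ℝ := max x 0

/-- Partial derivative in the `i`-th coordinate direction. -/
def pd (i : Fin 3) (F : V3 → ℝ) (v : V3) : ℝ :=
  fderiv ℝ F v (EuclideanSpace.single i 1)

/-- The Landau-Coulomb diffusion matrix `A[g]`. -/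
def Amat (g : V3 → ℝ) (v : V3) : Matrix (Fin 3) (Fin 3) ℝ := fun i j =>
  ∫ w : V3, g w * (((if i = j then (1 : ℝ) else 0) -
      (v - w) i * (v - w) j / ‖v - w‖ ^ 2) / (8 * π * ‖v - w‖))

/-- The Coulomb potential `a[g]`. -/
def apot (g : V3 → ℝ) (v : V3) : ℝ := ∫ w : V3, g w / (4 * π * ‖v - w‖)

/-- Right-hand side `∇·(A[g]∇g − ∇a[g] g)` of the Landau equation. -/
def landauRHS (g : V3 → ℝ) (v : V3) : ℝ :=
  ∑ i : Fin 3, pd i (fun u =>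
    (∑ j : Fin 3, Amat g u i j * pd j g u) - pd i (apot g) u * g u) v

/-- `f` solves the Landau equation pointwise at every time in `s`. -/
def SolvesLandauOn (s : Set ℝ) (f : ℝ → V3 → ℝ) : Prop :=
  ∀ t ∈ s, ∀ v : V3, HasDerivAt (fun τ => f τ v) (landauRHS (f t) v) t

/-- A smooth, rapidly decaying (Schwartz-class in `v`) nonnegative solution on the
time set `s`, solving the equation pointwise on the interior of `s`. -/
structure SmoothRapidSolutionOn (s : Set ℝ) (f : ℝ → V3 → ℝ) : Prop where
  nonneg : ∀ t ∈ s, ∀ v : V3, 0 ≤ f t v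
  smooth : ContDiffOn ℝ (⊤ : ℕ∞) (fun q : ℝ × V3 => f q.1 q.2) (s ×ˢ (Set.univ : Set V3))
  schwartz : ∀ t ∈ s, ∃ φ : SchwartzMap V3 ℝ, ∀ v, f t v = φ v
  solves : SolvesLandauOn (interior s) f

/-- Normalization: unit mass, zero mean velocity, temperature `3`. -/
def Normalized (g : V3 → ℝ) : Prop :=
  (∫ v : V3, g v) = 1 ∧ (∀ i : Fin 3, (∫ v : V3, v i * g v) = 0) ∧
    (∫ v : V3, ‖v‖ ^ 2 * g v) = 3

/-- `c • Id ≤ M` as quadratic forms. -/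
def matGE (c : ℝ) (M : Matrix (Fin 3) (Fin 3) ℝ) : Prop :=
  ∀ ξ : Fin 3 → ℝ, c * ∑ i, ξ i ^ 2 ≤ ∑ i, ∑ j, M i j * ξ i * ξ j

/-- `M ≤ c • Id` as quadratic forms. -/
def matLE (M : Matrix (Fin 3) (Fin 3) ℝ) (c : ℝ) : Prop :=
  ∀ ξ : Fin 3 → ℝ, (∑ i, ∑ j, M i j * ξ i * ξ j) ≤ c * ∑ i, ξ i ^ 2

/-- `‖A[g]‖_{L^∞}`: sup over `v` of the operator norm of `A[g](v)`. -/
def AinfNorm (g : V3 → ℝ) : ℝ :=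
  ⨆ v : V3, ‖Matrix.toEuclideanCLM (𝕜 := ℝ) (Amat g v)‖

/-- Fisher information (with the convention `x/0 = 0`). -/
def fisher (g : V3 → ℝ) : ℝ := ∫ v : V3, ‖gradient g v‖ ^ 2 / g v

lemma Npos (v : V3) : (0:ℝ) < 1 + ‖v‖ ^ 2 := by positivity

lemma japk (k : ℝ) (v : V3) : jap v ^ (-k) = (1 + ‖v‖ ^ 2) ^ (-(k/2)) := by
  rw [jap, Real.sqrt_eq_rpow, ← Real.rpow_mul (le_of_lt (Npos v))]
  congr 1; ring

lemma hasFDerivAt_N (v : V3) :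
    HasFDerivAt (fun u : V3 => 1 + ‖u‖ ^ 2)
      (∑ i : Fin 3, (2 * v i) • (EuclideanSpace.proj (𝕜 := ℝ) i)) v := by
  have h : (fun u : V3 => 1 + ‖u‖ ^ 2) = fun u : V3 => 1 + ∑ i : Fin 3, u i ^ 2 := by
    funext u
    rw [EuclideanSpace.norm_eq, Real.sq_sqrt (by positivity)]
    simp [sq_abs]
  rw [h]
  have : HasFDerivAt (fun u : V3 => ∑ i : Fin 3, u i ^ 2)
      (∑ i : Fin 3, (2 * v i) • (EuclideanSpace.proj (𝕜 := ℝ) i)) v := by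
    apply HasFDerivAt.fun_sum
    intro i _
    have := (hasDerivAt_pow 2 (v i)).comp_hasFDerivAt v
      ((EuclideanSpace.proj (𝕜 := ℝ) i).hasFDerivAt (x := v))
    simpa [pow_one, Function.comp_def] using this
  simpa using this.const_add 1

lemma Dapply (v : V3) (j : Fin 3) :
    (∑ i : Fin 3, (2 * v i) • (EuclideanSpace.proj (𝕜 := ℝ) i))
      (EuclideanSpace.single j 1) = 2 * v j := by
  rw [ContinuousLinearMap.sum_apply]
  have : ∀ i : Fin 3, ((2 * v i) • (EuclideanSpace.proj (𝕜 := ℝ) i))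
      (EuclideanSpace.single j 1) = if i = j then 2 * v i else 0 := by
    intro i
    by_cases h : i = j <;>
      simp [EuclideanSpace.single_apply, h, eq_comm]
  simp [this]

lemma pd_rpow (c p : ℝ) (j : Fin 3) (u : V3) :
    pd j (fun w : V3 => c * (1 + ‖w‖ ^ 2) ^ p) u
      = c * (p * (1 + ‖u‖ ^ 2) ^ (p - 1) * (2 * u j)) := by
  have h := ((hasFDerivAt_N u).rpow_const (p := p)
    (Or.inl (ne_of_gt (Npos u)))).const_mul c
  rw [pd, h.fderiv]
  simp [Dapply]

lemma pd_pd (c p : ℝ) (i j : Fin 3) (v : V3) :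
    pd i (fun u => pd j (fun w : V3 => c * (1 + ‖w‖ ^ 2) ^ p) u) v
      = (if i = j then 2 * p * c * (1 + ‖v‖ ^ 2) ^ (p - 1) else 0)
        + (4 * p * (p - 1) * c) * ((1 + ‖v‖ ^ 2) ^ (p - 2) * (v i * v j)) := by
  have hfun : (fun u => pd j (fun w : V3 => c * (1 + ‖w‖ ^ 2) ^ p) u)
      = fun u : V3 => (2 * c * p) * (u j * (1 + ‖u‖ ^ 2) ^ (p - 1)) := by
    funext u; rw [pd_rpow]; ring
  rw [pd, hfun]
  have h1 : HasFDerivAt (fun u : V3 => (1 + ‖u‖ ^ 2) ^ (p - 1))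
      (((p - 1) * (1 + ‖v‖ ^ 2) ^ (p - 1 - 1)) •
        (∑ l : Fin 3, (2 * v l) • (EuclideanSpace.proj (𝕜 := ℝ) l))) v :=
    (hasFDerivAt_N v).rpow_const (Or.inl (ne_of_gt (Npos v)))
  have h2 : HasFDerivAt (fun u : V3 => u j) (EuclideanSpace.proj (𝕜 := ℝ) j) v :=
    (EuclideanSpace.proj (𝕜 := ℝ) j).hasFDerivAt
  have h3 := (h2.mul h1).const_mul (2 * c * p)
  rw [HasFDerivAt.fderiv (f := fun u : V3 => (2 * c * p) * (u j * (1 + ‖u‖ ^ 2) ^ (p - 1))) h3]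
  have hexp : p - 1 - 1 = p - 2 := by ring
  by_cases hij : i = j
  · subst hij
    simp [Dapply, EuclideanSpace.single_apply, hexp]
    ring
  · simp [Dapply, EuclideanSpace.single_apply, hexp, hij, Ne.symm hij]
    ring

/-- `ψ(t,v) = a e^{-ηt} ⟨v⟩^{-k}` is a subsolution of the linearized equation
`∂_t ψ ≤ A[f] : ∇²ψ + f ψ`. -/
theorem poly_decaying_subsolution
    (lam Lam k : ℝ) (hlam : 0 < lam) (hLL : lam ≤ Lam) (hk : 5 < k) :
    ∃ η : ℝ, 0 < η ∧
      ∀ a : ℝ, 0 < a →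
      ∀ (T : ℝ) (f : ℝ → V3 → ℝ),
        (∀ t ∈ Set.Icc (0 : ℝ) T, ∀ v : V3, 0 ≤ f t v) →
        ContDiffOn ℝ (⊤ : ℕ∞) (fun q : ℝ × V3 => f q.1 q.2)
          (Set.Icc 0 T ×ˢ (Set.univ : Set V3)) →
        SolvesLandauOn (Set.Ioo 0 T) f →
        (∀ t ∈ Set.Icc (0 : ℝ) T, ∀ v : V3,
          matGE (lam * jap v ^ (-(3 : ℝ))) (Amat (f t) v)) →
        (∀ t ∈ Set.Icc (0 : ℝ) T, ∀ v : V3, matLE (Amat (f t) v) Lam) →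
        ∀ t ∈ Set.Ioo (0 : ℝ) T, ∀ v : V3,
          deriv (fun s => a * Real.exp (-η * s) * jap v ^ (-k)) t ≤
            (∑ i : Fin 3, ∑ j : Fin 3, Amat (f t) v i j *
              pd i (fun u => pd j (fun w => a * Real.exp (-η * t) * jap w ^ (-k)) u) v) +
            f t v * (a * Real.exp (-η * t) * jap v ^ (-k)) := by
  have hLam : 0 < Lam := lt_of_lt_of_le hlam hLL
  have hk0 : (0:ℝ) < k := by linarith
  refine ⟨3 * k * Lam, by positivity, ?_⟩
  intro a ha T f hf0 _ _ hGE hLE t ht v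
  set η : ℝ := 3 * k * Lam with hη
  set c : ℝ := a * Real.exp (-η * t) with hc
  have hcpos : 0 < c := by positivity
  set p : ℝ := -(k / 2) with hp
  have hpneg : p < 0 := by rw [hp]; linarith
  set N : ℝ := 1 + ‖v‖ ^ 2 with hN
  have hNpos : 0 < N := Npos v
  have hN1 : (1:ℝ) ≤ N := by
    have := sq_nonneg ‖v‖
    rw [hN]; nlinarith
  have hN1pos : 0 < N ^ (p - 1) := Real.rpow_pos_of_pos hNpos _
  have hN2pos : 0 < N ^ (p - 2) := Real.rpow_pos_of_pos hNpos _
  have hNppos : 0 < N ^ p := Real.rpow_pos_of_pos hNpos _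
  have hC : jap v ^ (-k) = N ^ p := by rw [hN, hp]; exact japk k v
  -- time derivative
  have hL : deriv (fun s => a * Real.exp (-η * s) * jap v ^ (-k)) t = -η * (c * N ^ p) := by
    have h1 : HasDerivAt (fun s : ℝ => -η * s) (-η) t := by
      simpa using (hasDerivAt_id t).const_mul (-η)
    have hd := ((h1.exp).const_mul a).mul_const (jap v ^ (-k))
    rw [hd.deriv, hC, hc]
    ring
  -- the spatial profile
  have hψ : (fun w : V3 => a * Real.exp (-η * t) * jap w ^ (-k))
      = fun w : V3 => c * (1 + ‖w‖ ^ 2) ^ p := by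
    funext w
    rw [hc, hp, japk k w]
  -- second derivatives
  have hH : ∀ i j : Fin 3,
      pd i (fun u => pd j (fun w => a * Real.exp (-η * t) * jap w ^ (-k)) u) v
        = (if i = j then 2 * p * c * N ^ (p - 1) else 0)
          + (4 * p * (p - 1) * c) * (N ^ (p - 2) * (v i * v j)) := by
    intro i j
    simp only [hψ]
    rw [hN]
    exact pd_pd c p i j v
  have htIcc : t ∈ Set.Icc (0:ℝ) T := ⟨ht.1.le, ht.2.le⟩
  have hGE' := hGE t htIcc v
  have hLE' := hLE t htIcc v
  set M : Matrix (Fin 3) (Fin 3) ℝ := Amat (f t) v with hM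
  have hjappos : 0 < jap v := Real.sqrt_pos.2 (Npos v)
  have hjap3 : 0 < lam * jap v ^ (-(3:ℝ)) :=
    mul_pos hlam (Real.rpow_pos_of_pos hjappos _)
  -- diagonal bounds
  have hdiag : ∀ l : Fin 3, 0 ≤ M l l ∧ M l l ≤ Lam := by
    intro l
    have h1 := hGE' ((Pi.single l 1 : Fin 3 → ℝ))
    have h2 := hLE' ((Pi.single l 1 : Fin 3 → ℝ))
    have hs : ∑ i : Fin 3, ((Pi.single l 1 : Fin 3 → ℝ) i) ^ 2 = 1 := by
      simp [Pi.single_apply]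
    have hq : ∑ i : Fin 3, ∑ j : Fin 3, M i j * (Pi.single l 1 : Fin 3 → ℝ) i * (Pi.single l 1 : Fin 3 → ℝ) j
        = M l l := by
      simp [Pi.single_apply, mul_ite, ite_mul, Finset.sum_ite_eq]
    rw [hs, hq] at h1 h2
    constructor
    · nlinarith
    · linarith
  have htr_le : ∑ l : Fin 3, M l l ≤ 3 * Lam := by
    calc ∑ l : Fin 3, M l l ≤ ∑ _l : Fin 3, Lam :=
          Finset.sum_le_sum (fun l _ => (hdiag l).2)
      _ = 3 * Lam := by simp [Finset.sum_const]
  -- positivity of the quadratic form at v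
  have hQ : 0 ≤ ∑ i : Fin 3, ∑ j : Fin 3, M i j * (v i * v j) := by
    have h1 := hGE' (fun i => v i)
    have h0 : 0 ≤ lam * jap v ^ (-(3:ℝ)) * ∑ i : Fin 3, (v i) ^ 2 :=
      mul_nonneg hjap3.le (Finset.sum_nonneg fun i _ => sq_nonneg _)
    have h2 : ∑ i : Fin 3, ∑ j : Fin 3, M i j * v i * v j
        = ∑ i : Fin 3, ∑ j : Fin 3, M i j * (v i * v j) := by
      refine Finset.sum_congr rfl fun i _ => Finset.sum_congr rfl fun j _ => by ring
    rw [← h2]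
    exact le_trans h0 h1
  -- sum identity
  have hS : ∑ i : Fin 3, ∑ j : Fin 3, M i j *
        ((if i = j then 2 * p * c * N ^ (p - 1) else 0)
          + (4 * p * (p - 1) * c) * (N ^ (p - 2) * (v i * v j)))
      = (2 * p * c * N ^ (p - 1)) * (∑ l : Fin 3, M l l)
        + (4 * p * (p - 1) * c * N ^ (p - 2)) *
            (∑ i : Fin 3, ∑ j : Fin 3, M i j * (v i * v j)) := by
    have hrow : ∀ i : Fin 3, ∑ j : Fin 3, M i j *
          ((if i = j then 2 * p * c * N ^ (p - 1) else 0)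
            + (4 * p * (p - 1) * c) * (N ^ (p - 2) * (v i * v j)))
        = (2 * p * c * N ^ (p - 1)) * M i i
          + (4 * p * (p - 1) * c * N ^ (p - 2)) * ∑ j : Fin 3, M i j * (v i * v j) := by
      intro i
      simp only [mul_add, Finset.sum_add_distrib, mul_ite, mul_zero, Finset.sum_ite_eq,
        Finset.mem_univ, if_true, Finset.mul_sum]
      congr 1
      · ring
      · exact Finset.sum_congr rfl fun j _ => by ring
    rw [Finset.sum_congr rfl fun i _ => hrow i, Finset.sum_add_distrib,
      ← Finset.mul_sum, ← Finset.mul_sum]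
  -- coefficient signs
  have hX : 2 * p * c * N ^ (p - 1) ≤ 0 := by
    have := mul_pos hcpos hN1pos
    nlinarith
  have h4 : 0 < 4 * p * (p - 1) := by nlinarith
  have hterm2 : 0 ≤ (4 * p * (p - 1) * c * N ^ (p - 2)) *
      (∑ i : Fin 3, ∑ j : Fin 3, M i j * (v i * v j)) :=
    mul_nonneg (le_of_lt (mul_pos (mul_pos h4 hcpos) hN2pos)) hQ
  have hterm1 : (2 * p * c * N ^ (p - 1)) * (3 * Lam)
      ≤ (2 * p * c * N ^ (p - 1)) * (∑ l : Fin 3, M l l) :=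
    mul_le_mul_of_nonpos_left htr_le hX
  have hNle : N ^ (p - 1) ≤ N ^ p :=
    Real.rpow_le_rpow_of_exponent_le hN1 (by linarith)
  have hkey : (-(3 * k * Lam) * c) * (N ^ p) ≤ (-(3 * k * Lam) * c) * (N ^ (p - 1)) :=
    mul_le_mul_of_nonpos_left hNle (by nlinarith [mul_pos (mul_pos (mul_pos (by norm_num : (0:ℝ) < 3) hk0) hLam) hcpos])
  have hfψ : 0 ≤ f t v * (c * jap v ^ (-k)) := by
    apply mul_nonneg (hf0 t htIcc v)
    rw [hC]
    exact le_of_lt (mul_pos hcpos hNppos)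
  have hident : (-(3 * k * Lam) * c) * (N ^ (p - 1)) = (2 * p * c * N ^ (p - 1)) * (3 * Lam) := by
    rw [hp]; ring
  have hident2 : -η * (c * N ^ p) = (-(3 * k * Lam) * c) * (N ^ p) := by
    rw [hη]; ring
  rw [hL]
  simp only [← hc] at hH
  simp only [hH]
  rw [hS]
  linarith [hkey, hterm1, hterm2, hfψ, hident, hident2]
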